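/- Let F(x_1,...,x_n) be a quasi-symmetric polynomial in n variables over F_{q^n}, i.e., F is fixed by the cyclic permutation of variables x_1 → x_2 → ... → x_n → x_1. Let f(t) = F(t, t^q, t^{q^2}, ..., t^{q^{n-1}}) ∈ F_{q^n}[t]. Then f(t^q) ≡ f(t) modulo the polynomial t^{q^n} − t. -/
import Mathlib


/-- Let `F(x₁,…,xₙ)` be a quasi-symmetric polynomial over `F_{q^n}` (fixed
by the cyclic permutation of the variables) and `f(t) = F(t, t^q, …, t^{q^{n-1}})`. Then
`f(t^q) ≡ f(t) mod (t^{q^n} - t)`. -/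
theorem quasiSymmetric_eval_frobenius_congruent (q n : ℕ) (hq : IsPrimePow q) (hn : 1 ≤ n)
    (K : Type*) [Field K] [Fintype K] (hK : Fintype.card K = q ^ n)
    (F : MvPolynomial (Fin n) K) (hF : MvPolynomial.rename (finRotate n) F = F) :
    (Polynomial.X ^ q ^ n - Polynomial.X : Polynomial K) ∣
      ((MvPolynomial.aeval fun i : Fin n => (Polynomial.X : Polynomial K) ^ q ^ (i : ℕ)) F).comp
          (Polynomial.X ^ q)
        - (MvPolynomial.aeval fun i : Fin n => (Polynomial.X : Polynomial K) ^ q ^ (i : ℕ)) F := by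
  obtain ⟨m, rfl⟩ : ∃ m, n = m + 1 := ⟨n - 1, (Nat.succ_pred_eq_of_pos hn).symm⟩
  set g : Fin (m + 1) → Polynomial K := fun i => Polynomial.X ^ q ^ (i : ℕ) with hg
  set I : Ideal (Polynomial K) :=
    Ideal.span {(Polynomial.X ^ q ^ (m + 1) - Polynomial.X : Polynomial K)} with hI
  rw [← Ideal.mem_span_singleton, ← hI, ← Ideal.Quotient.eq]
  let mk : Polynomial K →ₐ[K] Polynomial K ⧸ I := Ideal.Quotient.mkₐ K I
  show mk (((MvPolynomial.aeval g) F).comp (Polynomial.X ^ q)) = mk ((MvPolynomial.aeval g) F)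
  have hX : mk (Polynomial.X ^ q ^ (m + 1)) = mk Polynomial.X := by
    have hmem : (Polynomial.X ^ q ^ (m + 1) - Polynomial.X : Polynomial K) ∈ I :=
      Ideal.subset_span (Set.mem_singleton _)
    show Ideal.Quotient.mk I _ = Ideal.Quotient.mk I _
    exact Ideal.Quotient.eq.mpr hmem
  have comp_eq : ∀ p : Polynomial K,
      p.comp (Polynomial.X ^ q) = Polynomial.aeval (Polynomial.X ^ q) p := fun p => by
    rw [Polynomial.aeval_def, Polynomial.comp, Polynomial.algebraMap_eq]
  have key : ∀ i : Fin (m + 1),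
      mk ((g i).comp (Polynomial.X ^ q)) = mk (g (finRotate (m + 1) i)) := by
    intro i
    have h1 : (g i).comp (Polynomial.X ^ q) = Polynomial.X ^ q ^ ((i : ℕ) + 1) := by
      simp [hg, Polynomial.X_pow_comp, ← pow_mul, pow_succ, Nat.mul_comm]
    rw [h1, finRotate_succ_apply]
    rcases lt_or_eq_of_le (Nat.succ_le_of_lt i.isLt) with h | h
    · have hv : ((i + 1 : Fin (m + 1)) : ℕ) = (i : ℕ) + 1 :=
        Fin.val_add_one_of_lt (by rw [Fin.lt_iff_val_lt_val, Fin.val_last]; omega)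
      rw [hg]; simp only [hv]
    · have hi : i = Fin.last m := Fin.ext (by rw [Fin.val_last]; omega)
      rw [hi, Fin.last_add_one]
      have hv : ((Fin.last m : Fin (m + 1)) : ℕ) + 1 = m + 1 := by rw [Fin.val_last]
      rw [hv]
      simpa [hg] using hX
  have hψ : ∀ p : Polynomial K, mk (p.comp (Polynomial.X ^ q))
      = (mk.comp (Polynomial.aeval (Polynomial.X ^ q : Polynomial K))) p := fun p => by
    simp [comp_eq]
  have hfg : (fun i => (mk.comp (Polynomial.aeval (Polynomial.X ^ q : Polynomial K))) (g i))
      = ((fun j => mk (g j)) ∘ ⇑(finRotate (m + 1))) :=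
    funext fun i => ((hψ (g i)).symm).trans (key i)
  calc mk (((MvPolynomial.aeval g) F).comp (Polynomial.X ^ q))
      = (mk.comp (Polynomial.aeval (Polynomial.X ^ q : Polynomial K)))
          ((MvPolynomial.aeval g) F) := hψ _
    _ = MvPolynomial.aeval
          (fun i => (mk.comp (Polynomial.aeval (Polynomial.X ^ q : Polynomial K))) (g i)) F :=
        MvPolynomial.comp_aeval_apply g _ F
    _ = MvPolynomial.aeval ((fun j => mk (g j)) ∘ ⇑(finRotate (m + 1))) F := by rw [hfg]
    _ = MvPolynomial.aeval (fun j => mk (g j)) F := by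
        conv_rhs => rw [← hF, MvPolynomial.aeval_rename]
    _ = mk ((MvPolynomial.aeval g) F) := (MvPolynomial.comp_aeval_apply g mk F).symm
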